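/- Let U : ℝ → ℝ be twice continuously differentiable with compactly supported second derivative U'', and let g : ℝ → ℝ be continuously differentiable. Then, with U'(±∞) := lim_{λ→±∞} U'(λ), there exists b ∈ ℝ such that for all u ∈ ℝ: (1/2)·∫_ℝ sgn(u − λ)·(g(u) − g(λ))·U''(λ) dλ = ∫₀^u U'(s) g'(s) ds − ((U'(+∞) + U'(−∞))/2)·g(u) + b. -/

import Mathlib

open Filter MeasureTheory

/-- Averaging the Kruzkov entropy fluxes `sgn(u - λ)(g(u) - g(λ))` against
`U''(λ)/2` recovers, modulo an affine expression in `g(u)`, the entropy flux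
`∫₀ᵘ U'(s) g'(s) ds` of a smooth entropy `U` that is linear at infinity. -/
theorem kruzkov_entropy_flux_reconstruction
    (U : ℝ → ℝ) (hU : ContDiff ℝ 2 U)
    (hsupp : HasCompactSupport (deriv (deriv U)))
    (g : ℝ → ℝ) (hg : ContDiff ℝ 1 g) :
    ∃ Lp Lm b : ℝ,
      Tendsto (deriv U) atTop (nhds Lp) ∧
      Tendsto (deriv U) atBot (nhds Lm) ∧
      ∀ u : ℝ,
        (1 / 2) * ∫ l : ℝ, Real.sign (u - l) * (g u - g l) * deriv (deriv U) l
          = (∫ s in (0:ℝ)..u, deriv U s * deriv g s)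
            - ((Lp + Lm) / 2) * g u + b := by
  set φ := deriv (deriv U) with hφdef
  have hU1 : ContDiff ℝ 1 (deriv U) := by
    have h : ContDiff ℝ ((1 : ℕ) + 1) U := by exact_mod_cast hU
    exact (contDiff_succ_iff_deriv.mp h).2.2
  have hφc : Continuous φ := (contDiff_one_iff_deriv.mp hU1).2
  have hdU : Differentiable ℝ (deriv U) := hU1.differentiable one_ne_zero
  have hU'd : ∀ x, HasDerivAt (deriv U) (φ x) x := fun x => (hdU x).hasDerivAt
  have hgc : Continuous g := hg.continuous
  have hg'c : Continuous (deriv g) := (contDiff_one_iff_deriv.mp hg).2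
  have hgd : ∀ x, HasDerivAt g (deriv g x) x := fun x => (hg.differentiable one_ne_zero x).hasDerivAt
  -- radius of support
  obtain ⟨R₀, hR₀⟩ := hsupp.isCompact.isBounded.subset_closedBall 0
  set R : ℝ := max R₀ 0 + 1 with hRdef
  have hR1 : (1:ℝ) ≤ R := by have := le_max_right R₀ 0; simp only [hRdef]; linarith
  have hRpos : (0:ℝ) < R := by linarith
  have hφ0 : ∀ l : ℝ, R ≤ |l| → φ l = 0 := by
    intro l hl
    apply image_eq_zero_of_notMem_tsupport
    intro hmem
    have := hR₀ hmem
    rw [Metric.mem_closedBall, Real.dist_eq, sub_zero] at this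
    have : R₀ ≤ max R₀ 0 := le_max_left _ _
    have h2 := hR₀ hmem
    rw [Metric.mem_closedBall, Real.dist_eq, sub_zero] at h2
    linarith
  -- FTC for φ
  have hFTC : ∀ a b : ℝ, ∫ l in a..b, φ l = deriv U b - deriv U a := fun a b =>
    intervalIntegral.integral_eq_sub_of_hasDerivAt (fun y _ => hU'd y) (hφc.intervalIntegrable a b)
  have hconst_top : ∀ x : ℝ, R ≤ x → deriv U x = deriv U R := by
    intro x hx
    have hz : ∫ l in R..x, φ l = 0 := by
      rw [intervalIntegral.integral_congr (g := fun _ => (0:ℝ)) ?_, intervalIntegral.integral_zero]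
      intro y hy
      rw [Set.uIcc_of_le hx] at hy
      exact hφ0 y (by rw [abs_of_nonneg (by linarith [hy.1])]; linarith [hy.1])
    have := hFTC R x
    rw [hz] at this; linarith
  have hconst_bot : ∀ x : ℝ, x ≤ -R → deriv U x = deriv U (-R) := by
    intro x hx
    have hz : ∫ l in x..(-R), φ l = 0 := by
      rw [intervalIntegral.integral_congr (g := fun _ => (0:ℝ)) ?_, intervalIntegral.integral_zero]
      intro y hy
      rw [Set.uIcc_of_le hx] at hy
      exact hφ0 y (by rw [abs_of_nonpos (by linarith [hy.2])]; linarith [hy.2])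
    have := hFTC x (-R)
    rw [hz] at this; linarith
  refine ⟨deriv U R, deriv U (-R),
    deriv U 0 * g 0 - (1/2) * (∫ l in (-R)..(0:ℝ), g l * φ l)
      + (1/2) * (∫ l in (0:ℝ)..R, g l * φ l), ?_, ?_, ?_⟩
  · exact Tendsto.congr' ((eventually_ge_atTop R).mono fun x hx => (hconst_top x hx).symm)
      tendsto_const_nhds
  · exact Tendsto.congr' ((eventually_le_atBot (-R)).mono fun x hx => (hconst_bot x hx).symm)
      tendsto_const_nhds
  intro u
  set M : ℝ := max R |u| + 1 with hMdef
  have hMR : R ≤ M := by have := le_max_left R |u|; simp only [hMdef]; linarith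
  have hMu : |u| < M := by have := le_max_right R |u|; simp only [hMdef]; linarith
  have huM : u < M := lt_of_le_of_lt (le_abs_self u) hMu
  have hMu' : -M < u := by have := neg_abs_le u; linarith
  set f : ℝ → ℝ := fun l => Real.sign (u - l) * (g u - g l) * φ l with hfdef
  have hsignm : Measurable Real.sign := by
    have hs : Real.sign = fun r : ℝ => if r < 0 then (-1:ℝ) else if 0 < r then 1 else 0 := by
      funext r; rfl
    rw [hs]
    exact Measurable.ite (measurableSet_lt measurable_id measurable_const) measurable_const
      (Measurable.ite (measurableSet_lt measurable_const measurable_id) measurable_const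
        measurable_const)
  have hGc : Continuous fun l => (g u - g l) * φ l := (continuous_const.sub hgc).mul hφc
  have hGsupp : HasCompactSupport fun l => (g u - g l) * φ l := hsupp.mul_left
  have hGint : Integrable fun l => (g u - g l) * φ l :=
    hGc.integrable_of_hasCompactSupport hGsupp
  have hfm : AEStronglyMeasurable f volume :=
    (((hsignm.comp (measurable_const.sub measurable_id)).mul
      ((continuous_const.sub hgc).measurable)).mul hφc.measurable).aestronglyMeasurable
  have hfi : Integrable f := by
    refine hGint.norm.mono' hfm ?_
    filter_upwards with l
    have hsb : |Real.sign (u - l)| ≤ 1 := by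
      rcases Real.sign_apply_eq (u - l) with h | h | h <;> rw [h] <;> norm_num
    have : ‖f l‖ = |Real.sign (u - l)| * ‖(g u - g l) * φ l‖ := by
      simp only [hfdef, Real.norm_eq_abs, abs_mul, mul_assoc]
    rw [this]
    calc |Real.sign (u - l)| * ‖(g u - g l) * φ l‖ ≤ 1 * ‖(g u - g l) * φ l‖ :=
          mul_le_mul_of_nonneg_right hsb (norm_nonneg _)
      _ = ‖(g u - g l) * φ l‖ := one_mul _
  have hIoc : ∫ l, f l = ∫ l in (-M)..M, f l := by
    rw [intervalIntegral.integral_of_le (by linarith : -M ≤ M)]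
    refine (setIntegral_eq_integral_of_forall_compl_eq_zero fun l hl => ?_).symm
    have hφl : φ l = 0 := by
      apply hφ0
      by_cases h1 : l ≤ -M
      · rw [abs_of_nonpos (by linarith)]; linarith
      · push_neg at h1
        have h2 : M < l := by
          by_contra h2; push_neg at h2; exact hl ⟨h1, h2⟩
        rw [abs_of_nonneg (by linarith)]; linarith
    simp [hfdef, hφl]
  have hsplitI : ∫ l in (-M)..M, f l = (∫ l in (-M)..u, f l) + ∫ l in u..M, f l :=
    (intervalIntegral.integral_add_adjacent_intervals (hfi.intervalIntegrable)
      (hfi.intervalIntegrable)).symm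
  have hae : ∀ᵐ l : ℝ, l ≠ u := by
    have hset : {l : ℝ | ¬ l ≠ u} = {u} := by ext l; simp
    rw [ae_iff, hset]; exact measure_singleton u
  have hc1 : ∫ l in (-M)..u, f l = ∫ l in (-M)..u, (g u - g l) * φ l := by
    apply intervalIntegral.integral_congr_ae
    filter_upwards [hae] with l hne hl
    rw [Set.uIoc_of_le (by linarith : -M ≤ u)] at hl
    have hsign : Real.sign (u - l) = 1 :=
      Real.sign_of_pos (sub_pos.mpr (hl.2.lt_of_ne hne))
    simp only [hfdef, hsign, one_mul]
  have hc2 : ∫ l in u..M, f l = - ∫ l in u..M, (g u - g l) * φ l := by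
    rw [← intervalIntegral.integral_neg]
    apply intervalIntegral.integral_congr_ae
    filter_upwards with l hl
    rw [Set.uIoc_of_le (le_of_lt huM)] at hl
    have hsign : Real.sign (u - l) = -1 :=
      Real.sign_of_neg (by linarith [hl.1])
    simp only [hfdef]; rw [hsign]; ring
  have expand : ∀ a b : ℝ, ∫ l in a..b, (g u - g l) * φ l
      = g u * (deriv U b - deriv U a) - ∫ l in a..b, g l * φ l := by
    intro a b
    have h1 : ∀ l, (g u - g l) * φ l = g u * φ l - g l * φ l := fun l => by ring
    simp_rw [h1]
    rw [intervalIntegral.integral_sub (f := fun l => g u * φ l) (g := fun l => g l * φ l) ((continuous_const.mul hφc).intervalIntegrable _ _)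
      ((hgc.mul hφc).intervalIntegrable _ _), intervalIntegral.integral_const_mul, hFTC]
  have hgφint : ∀ a b : ℝ, IntervalIntegrable (fun l => g l * φ l) volume a b :=
    fun a b => (hgc.mul hφc).intervalIntegrable a b
  have hzero_left : ∫ l in (-M)..(-R), g l * φ l = 0 := by
    rw [intervalIntegral.integral_congr (g := fun _ => (0:ℝ)) ?_, intervalIntegral.integral_zero]
    intro l hl
    rw [Set.uIcc_of_le (by linarith : -M ≤ -R)] at hl
    have : φ l = 0 := hφ0 l (by rw [abs_of_nonpos (by linarith [hl.2])]; linarith [hl.2])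
    simp [this]
  have hzero_right : ∫ l in R..M, g l * φ l = 0 := by
    rw [intervalIntegral.integral_congr (g := fun _ => (0:ℝ)) ?_, intervalIntegral.integral_zero]
    intro l hl
    rw [Set.uIcc_of_le hMR] at hl
    have : φ l = 0 := hφ0 l (by rw [abs_of_nonneg (by linarith [hl.1])]; linarith [hl.1])
    simp [this]
  have hB1 : ∫ l in (-M)..u, g l * φ l
      = (∫ l in (-R)..(0:ℝ), g l * φ l) + ∫ l in (0:ℝ)..u, g l * φ l := by
    rw [← intervalIntegral.integral_add_adjacent_intervals (hgφint (-M) 0) (hgφint 0 u),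
        ← intervalIntegral.integral_add_adjacent_intervals (hgφint (-M) (-R)) (hgφint (-R) 0),
        hzero_left, zero_add]
  have hB2 : ∫ l in u..M, g l * φ l
      = (∫ l in (0:ℝ)..R, g l * φ l) - ∫ l in (0:ℝ)..u, g l * φ l := by
    rw [← intervalIntegral.integral_add_adjacent_intervals (hgφint u 0) (hgφint 0 M),
        ← intervalIntegral.integral_add_adjacent_intervals (hgφint 0 R) (hgφint R M),
        hzero_right, add_zero, intervalIntegral.integral_symm 0 u]
    ring
  have hIBP : ∫ s in (0:ℝ)..u, deriv U s * deriv g s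
      = deriv U u * g u - deriv U 0 * g 0 - ∫ s in (0:ℝ)..u, φ s * g s :=
    intervalIntegral.integral_mul_deriv_eq_deriv_mul (fun x _ => hU'd x) (fun x _ => hgd x)
      (hφc.intervalIntegrable _ _) (hg'c.intervalIntegrable _ _)
  have hcomm : ∫ s in (0:ℝ)..u, φ s * g s = ∫ l in (0:ℝ)..u, g l * φ l := by
    apply intervalIntegral.integral_congr
    intro l _
    exact mul_comm _ _
  rw [hIoc, hsplitI, hc1, hc2, expand, expand, hB1, hB2, hIBP, hcomm,
     hconst_bot (-M) (by linarith), hconst_top M hMR]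
  ring
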